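/- Suppose 0 < c_1 ≤ c_2 < ∞, M > 0, k, n positive integers with k ≤ M n^{2/3}, and assume c_1 (e/(12(l∨1)))^{l/2} k^{k+(3l−1)/2} ≤ C(k,k+l) ≤ c_2 (e/(12(l∨1)))^{l/2} k^{k+(3l−1)/2} for all −1 ≤ l ≤ L where L ≤ 4k^{1/2}. Then there exist constants 0 < c_1' ≤ c_2' < ∞ depending only on M, c_1, c_2 such that c_1' k^{k−2} n ≤ Σ_{l=−1}^{L} C(k,k+l)/n^l ≤ c_2' k^{k−2} n. -/

import Mathlib

open Real Finset


lemma aux_log_le_div_e {t : ℝ} (ht : 0 < t) : Real.log t ≤ t / Real.exp 1 := by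
  have h1 : 0 < t / Real.exp 1 := div_pos ht (Real.exp_pos 1)
  have h2 := Real.log_le_sub_one_of_pos h1
  rw [Real.log_div (ne_of_gt ht) (Real.exp_ne_zero 1), Real.log_exp] at h2
  linarith

lemma aux_pow_half_bound {A x : ℝ} (hA : 0 < A) (hx : 1 ≤ x) :
    (A / x) ^ (x / 2) ≤ Real.exp (A / Real.exp 1) * (1/2 : ℝ) ^ (x / 2) := by
  have hx0 : 0 < x := lt_of_lt_of_le one_pos hx
  have key : Real.log (2 * A / x) * (x / 2) ≤ A / Real.exp 1 := by
    have h1 := aux_log_le_div_e (t := 2 * A / x) (by positivity)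
    have h2 : (2 * A / x / Real.exp 1) * (x / 2) = A / Real.exp 1 := by
      field_simp
    nlinarith [Real.exp_pos 1]
  have hsplit : A / x = (2 * A / x) * (1/2 : ℝ) := by field_simp
  rw [hsplit, Real.mul_rpow (by positivity) (by positivity)]
  gcongr
  rw [Real.rpow_def_of_pos (by positivity)]
  exact Real.exp_le_exp.2 key

lemma aux_geom_sum (q : ℝ) (hq0 : 0 < q) (hq1 : q < 1) (L : ℤ) :
    ∑ l ∈ Finset.Icc (-1 : ℤ) L, q ^ ((l : ℝ) + 1) ≤ (1 - q)⁻¹ := by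
  have h1 : ∑ l ∈ Finset.Icc (-1 : ℤ) L, q ^ ((l : ℝ) + 1)
      = ∑ m ∈ (Finset.Icc (-1 : ℤ) L).image (fun l => (l + 1).toNat), q ^ m := by
    rw [Finset.sum_image]
    · refine Finset.sum_congr rfl fun l hl => ?_
      have hl1 : (0:ℤ) ≤ l + 1 := by
        have := (Finset.mem_Icc.1 hl).1; omega
      have h2 : (((l+1).toNat : ℕ) : ℝ) = (l:ℝ) + 1 := by
        exact_mod_cast Int.toNat_of_nonneg hl1
      rw [← Real.rpow_natCast q ((l+1).toNat), h2]
    · intro a ha b hb hab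
      have ha1 : (0:ℤ) ≤ a + 1 := by have := (Finset.mem_Icc.1 ha).1; omega
      have hb1 : (0:ℤ) ≤ b + 1 := by have := (Finset.mem_Icc.1 hb).1; omega
      simp only at hab; omega
  rw [h1, ← tsum_geometric_of_lt_one hq0.le hq1]
  exact Summable.sum_le_tsum _ (fun i _ => by positivity)
    (summable_geometric_of_lt_one hq0.le hq1)

lemma aux_ratio (M : ℝ) (hM : 0 < M) (l : ℤ) (hl : -1 ≤ l) :
    (Real.exp 1 / (12 * max (l:ℝ) 1)) ^ ((l:ℝ)/2) * M ^ ((3:ℝ) * ((l:ℝ)+1) / 2)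
      ≤ (max ((12/Real.exp 1)^((1:ℝ)/2))
          (M^((3:ℝ)/2) * Real.exp (Real.exp 1 * M^3/12 / Real.exp 1) / ((1/2:ℝ)^((1:ℝ)/2))))
        * ((1/2:ℝ)^((1:ℝ)/2)) ^ ((l:ℝ)+1) := by
  set e := Real.exp 1 with he
  have he0 : 0 < e := Real.exp_pos 1
  set q : ℝ := (1/2:ℝ)^((1:ℝ)/2) with hq
  have hq0 : 0 < q := Real.rpow_pos_of_pos (by norm_num) _
  set A : ℝ := e * M^3 / 12 with hA
  have hA0 : 0 < A := by positivity
  set D : ℝ := M^((3:ℝ)/2) * Real.exp (A / e) with hD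
  have hD0 : 0 < D := by positivity
  rcases eq_or_lt_of_le hl with heq | hlt
  · -- l = -1
    subst heq
    push_cast
    norm_num
    left
    rw [show (-(1/2) : ℝ) = -(1/2) from rfl, Real.rpow_neg (by positivity),
      ← Real.inv_rpow (by positivity), inv_div]
  · have hl0 : (0:ℤ) ≤ l := by omega
    set x : ℝ := (l:ℝ) with hx
    have hx0 : (0:ℝ) ≤ x := by positivity
    have hm : (0:ℝ) < max x 1 := lt_of_lt_of_le one_pos (le_max_right _ _)
    have step1 : (e / (12 * max x 1)) ^ (x/2) * M ^ ((3:ℝ) * (x+1) / 2)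
        = M^((3:ℝ)/2) * (A / max x 1) ^ (x/2) := by
      have e1 : M ^ ((3:ℝ) * (x+1) / 2) = (M^(3:ℕ)) ^ (x/2) * M^((3:ℝ)/2) := by
        rw [← Real.rpow_natCast M 3, ← Real.rpow_mul hM.le, ← Real.rpow_add hM]
        norm_num
        ring_nf
      rw [e1, ← mul_assoc, ← Real.mul_rpow (by positivity) (by positivity)]
      rw [show e / (12 * max x 1) * M^(3:ℕ) = A / max x 1 by field_simp; ring]
      ring
    rw [step1]
    have step2 : (A / max x 1) ^ (x/2) ≤ Real.exp (A / e) * (1/2:ℝ) ^ (x/2) := by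
      rcases eq_or_lt_of_le hl0 with h0 | h1
      · have : x = 0 := by rw [hx, ← h0]; norm_num
        rw [this]
        norm_num
        positivity
      · have hx1 : (1:ℝ) ≤ x := by
          rw [hx]; exact_mod_cast h1
        rw [max_eq_left hx1]
        exact aux_pow_half_bound hA0 hx1
    have step3 : (1/2:ℝ) ^ (x/2) = q ^ x := by
      rw [hq, ← Real.rpow_mul (by norm_num)]
      ring_nf
    calc M^((3:ℝ)/2) * (A / max x 1) ^ (x/2)
        ≤ M^((3:ℝ)/2) * (Real.exp (A / e) * (1/2:ℝ) ^ (x/2)) := by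
          exact mul_le_mul_of_nonneg_left step2 (by positivity)
      _ = (D / q) * q ^ (x+1) := by
          rw [step3, Real.rpow_add hq0, Real.rpow_one, hD]
          field_simp
      _ ≤ _ := by
          gcongr
          exact le_max_right _ _


/-- If `C(k,k+l)` satisfies two-sided bounds
`c₁ (e/(12(l∨1)))^{l/2} k^{k+(3l−1)/2} ≤ C(k,k+l) ≤ c₂ (e/(12(l∨1)))^{l/2} k^{k+(3l−1)/2}`
for `−1 ≤ l ≤ L` with `L ≤ 4k^{1/2}`, and `k ≤ M n^{2/3}`, then
`Σ_{l=−1}^L C(k,k+l)/n^l` is bounded above and below by constant multiples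
(depending only on `M, c₁, c₂`) of `k^{k−2} n`. -/
theorem stmt18 (M c₁ c₂ : ℝ) (hM : 0 < M) (hc₁ : 0 < c₁) (hc₁₂ : c₁ ≤ c₂) :
    ∃ c₁' c₂' : ℝ, 0 < c₁' ∧ c₁' ≤ c₂' ∧
      ∀ (n k : ℕ) (L : ℤ) (C : ℤ → ℝ), 1 ≤ n → 1 ≤ k →
        (k : ℝ) ≤ M * (n : ℝ) ^ ((2 : ℝ) / 3) →
        (-1 : ℤ) ≤ L → (L : ℝ) ≤ 4 * (k : ℝ) ^ ((1 : ℝ) / 2) →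
        (∀ l ∈ Finset.Icc (-1 : ℤ) L,
          c₁ * (Real.exp 1 / (12 * (max (l : ℝ) 1))) ^ ((l : ℝ) / 2) *
              (k : ℝ) ^ ((k : ℝ) + (3 * (l : ℝ) - 1) / 2) ≤ C l ∧
          C l ≤ c₂ * (Real.exp 1 / (12 * (max (l : ℝ) 1))) ^ ((l : ℝ) / 2) *
              (k : ℝ) ^ ((k : ℝ) + (3 * (l : ℝ) - 1) / 2)) →
        c₁' * (k : ℝ) ^ ((k : ℝ) - 2) * n ≤ (∑ l ∈ Finset.Icc (-1 : ℤ) L, C l / (n : ℝ) ^ l)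
          ∧ (∑ l ∈ Finset.Icc (-1 : ℤ) L, C l / (n : ℝ) ^ l) ≤ c₂' * (k : ℝ) ^ ((k : ℝ) - 2) * n := by
  set e := Real.exp 1 with he
  have he0 : 0 < e := Real.exp_pos 1
  set q : ℝ := (1/2:ℝ)^((1:ℝ)/2) with hq
  have hq0 : 0 < q := Real.rpow_pos_of_pos (by norm_num) _
  have hq1 : q < 1 := Real.rpow_lt_one (by norm_num) (by norm_num) (by norm_num)
  set R : ℝ := max ((12/e)^((1:ℝ)/2))
      (M^((3:ℝ)/2) * Real.exp (e * M^3/12 / e) / q) with hR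
  have hR0 : 0 < R := lt_of_lt_of_le (Real.rpow_pos_of_pos (by positivity) _) (le_max_left _ _)
  have hinv1 : (1:ℝ) ≤ (1 - q)⁻¹ := by
    rw [le_inv_comm₀ (by norm_num) (by linarith)]
    linarith
  have hE : (e/12 : ℝ) ^ (-(1:ℝ)/2) = (12/e)^((1:ℝ)/2) := by
    rw [show (-(1:ℝ)/2) = -(1/2) by norm_num, Real.rpow_neg (by positivity),
      ← Real.inv_rpow (by positivity), inv_div]
  refine ⟨c₁ * (e/12) ^ (-(1:ℝ)/2), c₂ * R * (1 - q)⁻¹, by positivity, ?_, ?_⟩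
  · calc c₁ * (e/12) ^ (-(1:ℝ)/2) ≤ c₂ * R := by
          rw [hE]
          exact mul_le_mul hc₁₂ (le_max_left _ _) (by positivity) (by linarith)
      _ = c₂ * R * 1 := by ring
      _ ≤ c₂ * R * (1 - q)⁻¹ := by
          have hc₂ : 0 < c₂ := lt_of_lt_of_le hc₁ hc₁₂
          exact mul_le_mul_of_nonneg_left hinv1 (by positivity)
  intro n k L C hn hk hkM hL1 hL2 hC
  have hN0 : (0:ℝ) < (n:ℝ) := by exact_mod_cast Nat.lt_of_lt_of_le Nat.zero_lt_one hn
  have hK0 : (0:ℝ) < (k:ℝ) := by exact_mod_cast Nat.lt_of_lt_of_le Nat.zero_lt_one hk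
  have hc₂ : 0 < c₂ := lt_of_lt_of_le hc₁ hc₁₂
  set K := (k:ℝ) with hKdef
  set N := (n:ℝ) with hNdef
  have hbase : K ^ ((3:ℝ)/2) ≤ M^((3:ℝ)/2) * N := by
    calc K ^ ((3:ℝ)/2) ≤ (M * N ^ ((2:ℝ)/3)) ^ ((3:ℝ)/2) :=
          Real.rpow_le_rpow hK0.le hkM (by norm_num)
      _ = M^((3:ℝ)/2) * N := by
          rw [Real.mul_rpow hM.le (by positivity), ← Real.rpow_mul hN0.le]
          norm_num
  -- per-term bound for the upper estimate
  have hterm : ∀ l ∈ Finset.Icc (-1:ℤ) L,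
      C l / N ^ l ≤ (c₂ * K^(K-2) * N * R) * q ^ ((l:ℝ)+1) := by
    intro l hl
    obtain ⟨hlo, _⟩ := Finset.mem_Icc.1 hl
    have hx1 : (0:ℝ) ≤ (l:ℝ) + 1 := by
      have : (-1:ℝ) ≤ (l:ℝ) := by exact_mod_cast hlo
      linarith
    have hNl : (0:ℝ) < N ^ l := zpow_pos hN0 l
    have h1 : C l / N ^ l ≤ c₂ * (e / (12 * max (l:ℝ) 1)) ^ ((l:ℝ)/2)
        * K ^ (K + (3*(l:ℝ)-1)/2) / N ^ l :=
      div_le_div_of_nonneg_right ((hC l hl).2) hNl.le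
    set x := (l:ℝ) with hxdef
    have h2 : (e / (12 * max x 1)) ^ (x/2) * K ^ (K + (3*x-1)/2) / N ^ l
        ≤ K^(K-2) * N * (R * q ^ (x+1)) := by
      rw [show (N:ℝ) ^ l = N ^ (x:ℝ) from (Real.rpow_intCast N l).symm]
      have hP : K ^ (K + (3*x-1)/2) = K^(K-2) * K^((3:ℝ)/2*(x+1)) := by
        rw [← Real.rpow_add hK0]; congr 1; ring
      have hNsplit : N ^ (-x) = N * N^(-(x+1)) := by
        rw [show N * N^(-(x+1)) = N^(1:ℝ) * N^(-(x+1)) by rw [Real.rpow_one],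
          ← Real.rpow_add hN0]
        congr 1; ring
      have hKN : K^((3:ℝ)/2*(x+1)) * N^(-(x+1)) ≤ M^((3:ℝ)*(x+1)/2) := by
        have e1 : K^((3:ℝ)/2*(x+1)) * N^(-(x+1)) = (K^((3:ℝ)/2)/N)^(x+1) := by
          rw [Real.div_rpow (by positivity) hN0.le, ← Real.rpow_mul hK0.le,
            Real.rpow_neg hN0.le, div_eq_mul_inv]
          ring
        rw [e1]
        calc (K^((3:ℝ)/2)/N)^(x+1) ≤ (M^((3:ℝ)/2))^(x+1) := by
              apply Real.rpow_le_rpow (by positivity) _ hx1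
              rw [div_le_iff₀ hN0]
              exact hbase
          _ = M^((3:ℝ)*(x+1)/2) := by
              rw [← Real.rpow_mul hM.le]; congr 1; ring
      calc (e / (12 * max x 1)) ^ (x/2) * K ^ (K + (3*x-1)/2) / N ^ (x:ℝ)
          = K^(K-2) * N * ((e / (12 * max x 1)) ^ (x/2)
              * (K^((3:ℝ)/2*(x+1)) * N^(-(x+1)))) := by
            rw [div_eq_mul_inv, ← Real.rpow_neg hN0.le, hP, hNsplit]; ring
        _ ≤ K^(K-2) * N * ((e / (12 * max x 1)) ^ (x/2) * M^((3:ℝ)*(x+1)/2)) := by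
            gcongr
        _ ≤ K^(K-2) * N * (R * q ^ (x+1)) := by
            have := aux_ratio M hM l hlo
            gcongr
    calc C l / N ^ l ≤ c₂ * ((e / (12 * max x 1)) ^ (x/2) * K ^ (K + (3*x-1)/2) / N ^ l) := by
          rw [← mul_div_assoc, ← mul_assoc]; exact h1
      _ ≤ c₂ * (K^(K-2) * N * (R * q ^ (x+1))) := mul_le_mul_of_nonneg_left h2 hc₂.le
      _ = (c₂ * K^(K-2) * N * R) * q ^ (x+1) := by ring
  constructor
  · -- lower bound
    have hmem : (-1:ℤ) ∈ Finset.Icc (-1:ℤ) L := Finset.mem_Icc.2 ⟨le_refl _, hL1⟩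
    have hpos : ∀ l ∈ Finset.Icc (-1:ℤ) L, 0 ≤ C l / N ^ l := by
      intro l hl
      refine div_nonneg (le_trans ?_ (hC l hl).1) (zpow_pos hN0 l).le
      have hm : (0:ℝ) < max (l:ℝ) 1 := lt_of_lt_of_le one_pos (le_max_right _ _)
      positivity
    have hsingle := Finset.single_le_sum hpos hmem
    have hlow : c₁ * (e/12) ^ (-(1:ℝ)/2) * K^(K-2) ≤ C (-1) := by
      have h := (hC (-1) hmem).1
      norm_num at h
      convert h using 3 <;> norm_num [sub_eq_add_neg]
    refine le_trans ?_ hsingle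
    rw [show ((-1:ℤ)) = -(1:ℤ) from rfl, zpow_neg, zpow_one, div_eq_mul_inv (C (-1)) N⁻¹, inv_inv]
    exact mul_le_mul_of_nonneg_right hlow hN0.le
  · -- upper bound
    calc ∑ l ∈ Finset.Icc (-1:ℤ) L, C l / N ^ l
        ≤ ∑ l ∈ Finset.Icc (-1:ℤ) L, (c₂ * K^(K-2) * N * R) * q ^ ((l:ℝ)+1) :=
          Finset.sum_le_sum hterm
      _ = (c₂ * K^(K-2) * N * R) * ∑ l ∈ Finset.Icc (-1:ℤ) L, q ^ ((l:ℝ)+1) :=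
          (Finset.mul_sum _ _ _).symm
      _ ≤ (c₂ * K^(K-2) * N * R) * (1-q)⁻¹ := by
          apply mul_le_mul_of_nonneg_left (aux_geom_sum q hq0 hq1 L)
          positivity
      _ = c₂ * R * (1-q)⁻¹ * K^(K-2) * N := by ring
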